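/- The number of orbits of d-tuples of vectors in an infinite-dimensional vector space over a finite field with q elements, under the action of the group of linear automorphisms, equals the sum over m from 0 to d of the Gaussian q-binomial coefficient [d choose m]_q. -/

import Mathlib

/-- The Gaussian `q`-binomial coefficient `[d choose m]_q`, defined as
`∏_{i=1}^{m} (q^{d-m+i} − 1)/(q^i − 1)` for `m ≤ d` and `0` otherwise. -/
noncomputable def gaussBinomial (q : ℚ) (d m : ℕ) : ℚ :=
  if m ≤ d then ∏ i ∈ Finset.range m, (q ^ (d - m + i + 1) - 1) / (q ^ (i + 1) - 1) else 0

section Aux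

open Module Cardinal LinearMap Finset

variable {k : Type*} [Field k] {V : Type*} [AddCommGroup V] [Module k V]

noncomputable def lmapAux (k : Type*) [Field k] {V : Type*} [AddCommGroup V] [Module k V]
    (d : ℕ) (v : Fin d → V) : (Fin d → k) →ₗ[k] V :=
  Fintype.linearCombination k v

lemma lmapAux_single (d : ℕ) (v : Fin d → V) (i : Fin d) :
    lmapAux k d v (Pi.single i 1) = v i := by
  simp [lmapAux, Fintype.linearCombination_apply_single]

lemma lmapAux_smul (d : ℕ) (g : V ≃ₗ[k] V) (v : Fin d → V) :
    lmapAux k d (g • v) = (g : V →ₗ[k] V).comp (lmapAux k d v) := by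
  apply LinearMap.pi_ext'
  intro i
  apply LinearMap.ext
  intro x
  simp [lmapAux, Fintype.linearCombination_apply, Pi.smul_apply, LinearEquiv.smul_def,
    Finset.smul_sum]

lemma ker_lmapAux_smul (d : ℕ) (g : V ≃ₗ[k] V) (v : Fin d → V) :
    LinearMap.ker (lmapAux k d (g • v)) = LinearMap.ker (lmapAux k d v) := by
  rw [lmapAux_smul, LinearMap.ker_comp, LinearMap.ker_eq_bot.mpr g.injective,
    Submodule.comap_bot]

lemma rank_range_lt (d : ℕ) (v : Fin d → V) :
    Module.rank k (LinearMap.range (lmapAux k d v)) < ℵ₀ := by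
  have : Module.Finite k (LinearMap.range (lmapAux k d v)) := Module.Finite.range _
  exact Module.rank_lt_aleph0 k _

/-- extension of an equivalence of finite-rank subspaces -/
lemma extend_equiv (hV : ℵ₀ ≤ Module.rank k V) (W W' : Submodule k V)
    (hW : Module.rank k W < ℵ₀) (hW' : Module.rank k W' < ℵ₀) (e : W ≃ₗ[k] W') :
    ∃ g : V ≃ₗ[k] V, ∀ x : W, g x = e x := by
  obtain ⟨C, hC⟩ := Submodule.exists_isCompl W
  obtain ⟨C', hC'⟩ := Submodule.exists_isCompl W'
  have hrC : Module.rank k C = Module.rank k V := by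
    have h1 : Module.rank k W + Module.rank k C = Module.rank k V := by
      rw [← rank_prod']
      exact (Submodule.prodEquivOfIsCompl W C hC).rank_eq
    exact Cardinal.eq_of_add_eq_of_aleph0_le h1 (lt_of_lt_of_le hW hV) hV
  have hrC' : Module.rank k C' = Module.rank k V := by
    have h1 : Module.rank k W' + Module.rank k C' = Module.rank k V := by
      rw [← rank_prod']
      exact (Submodule.prodEquivOfIsCompl W' C' hC').rank_eq
    exact Cardinal.eq_of_add_eq_of_aleph0_le h1 (lt_of_lt_of_le hW' hV) hV
  have f : (C : Submodule k V) ≃ₗ[k] C' := LinearEquiv.ofRankEq _ _ (hrC.trans hrC'.symm)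
  refine ⟨((Submodule.prodEquivOfIsCompl W C hC).symm.trans
    ((e.prodCongr f).trans (Submodule.prodEquivOfIsCompl W' C' hC'))), fun x => ?_⟩
  simp [Submodule.prodEquivOfIsCompl_symm_apply_left, Submodule.coe_prodEquivOfIsCompl',
    LinearEquiv.prodCongr_apply]

/-- same kernel implies same orbit -/
lemma exists_equiv_of_ker_eq (hV : ℵ₀ ≤ Module.rank k V) (d : ℕ) (v w : Fin d → V)
    (h : LinearMap.ker (lmapAux k d v) = LinearMap.ker (lmapAux k d w)) :
    ∃ g : V ≃ₗ[k] V, g • v = w := by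
  set f₁ := lmapAux k d v
  set f₂ := lmapAux k d w
  let e : LinearMap.range f₁ ≃ₗ[k] LinearMap.range f₂ :=
    (f₁.quotKerEquivRange).symm.trans ((Submodule.quotEquivOfEq _ _ h).trans
      f₂.quotKerEquivRange)
  have he : ∀ x : Fin d → k, (e ⟨f₁ x, LinearMap.mem_range_self _ x⟩ : V) = f₂ x := by
    intro x
    have h1 : (⟨f₁ x, LinearMap.mem_range_self _ x⟩ : LinearMap.range f₁) =
        f₁.quotKerEquivRange (Submodule.Quotient.mk x) := by
      exact Subtype.ext (LinearMap.quotKerEquivRange_apply_mk _ _).symm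
    simp only [e, LinearEquiv.trans_apply, h1, LinearEquiv.symm_apply_apply]
    rw [Submodule.quotEquivOfEq_mk, LinearMap.quotKerEquivRange_apply_mk]
  obtain ⟨g, hg⟩ := extend_equiv hV _ _ (rank_range_lt d v) (rank_range_lt d w) e
  refine ⟨g, funext fun i => ?_⟩
  have h1 : v i = f₁ (Pi.single i 1) := (lmapAux_single d v i).symm
  have h2 : w i = f₂ (Pi.single i 1) := (lmapAux_single d w i).symm
  calc (g • v) i = g (v i) := rfl
    _ = w i := by
        rw [h1, h2]
        have := hg ⟨f₁ (Pi.single i 1), LinearMap.mem_range_self _ _⟩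
        rw [this, he]

lemma exists_tuple_ker (bV : Basis ℕ k V) (d : ℕ) (U : Submodule k (Fin d → k)) :
    ∃ v : Fin d → V, LinearMap.ker (lmapAux k d v) = U := by
  set n := finrank k ((Fin d → k) ⧸ U) with hn
  set b : Basis (Fin n) k ((Fin d → k) ⧸ U) := finBasis k _ with hb
  have hLI : LinearIndependent k (fun i : Fin n => bV (i : ℕ)) :=
    bV.linearIndependent.comp _ Fin.val_injective
  set L : (Fin n → k) →ₗ[k] V := Fintype.linearCombination k (fun i : Fin n => bV (i : ℕ))
    with hL
  have hLinj : LinearMap.ker L = ⊥ := by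
    rw [LinearMap.ker_eq_bot']
    intro c hc
    funext i
    exact Fintype.linearIndependent_iff.mp hLI c
      (by simpa [hL, Fintype.linearCombination_apply] using hc) i
  set j : ((Fin d → k) ⧸ U) →ₗ[k] V := L.comp b.equivFun.toLinearMap with hj
  have hjker : LinearMap.ker j = ⊥ := by
    rw [hj, LinearMap.ker_comp, hLinj, Submodule.comap_bot, LinearEquiv.ker]
  refine ⟨fun i => j (U.mkQ (Pi.single i 1)), ?_⟩
  have heq : lmapAux k d (fun i => j (U.mkQ (Pi.single i 1))) = j.comp U.mkQ := by
    apply LinearMap.pi_ext'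
    intro i
    apply LinearMap.ext
    intro x
    have hsx : (Pi.single i x : Fin d → k) = x • (Pi.single i 1 : Fin d → k) := by
      rw [← Pi.single_smul, smul_eq_mul, mul_one]
    simp [lmapAux, Fintype.linearCombination_apply_single, hsx, map_smul]
  rw [heq, LinearMap.ker_comp, hjker, Submodule.comap_bot, Submodule.ker_mkQ]

lemma card_orbit_eq (bV : Basis ℕ k V) (d : ℕ) :
    Nat.card (MulAction.orbitRel.Quotient (V ≃ₗ[k] V) (Fin d → V)) =
      Nat.card (Submodule k (Fin d → k)) := by
  have hV : ℵ₀ ≤ Module.rank k V := by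
    have h := bV.mk_eq_rank (R := k)
    rw [Cardinal.mk_nat, Cardinal.lift_aleph0] at h
    exact Cardinal.aleph0_le_lift.mp h.le
  refine Nat.card_congr (Equiv.ofBijective
    (Quotient.lift (fun v => LinearMap.ker (lmapAux k d v)) ?_) ⟨?_, ?_⟩)
  · intro a b hab
    obtain ⟨g, hg⟩ := MulAction.mem_orbit_iff.mp (MulAction.orbitRel_apply.mp hab)
    rw [← hg]
    exact ker_lmapAux_smul d g b
  · intro x y
    refine Quotient.inductionOn₂ x y ?_
    intro v w h
    obtain ⟨g, hg⟩ := exists_equiv_of_ker_eq hV d v w h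
    refine Quotient.sound (MulAction.orbitRel_apply.mpr (MulAction.mem_orbit_iff.mpr
      ⟨g⁻¹, by rw [← hg, inv_smul_smul]⟩))
  · intro U
    obtain ⟨v, hv⟩ := exists_tuple_ker bV d U
    exact ⟨Quotient.mk _ v, hv⟩


variable [Fintype k]

attribute [local instance] Fintype.ofFinite

noncomputable instance submodFinite (d : ℕ) : Finite (Submodule k (Fin d → k)) :=
  Finite.of_injective (fun W => (W : Set (Fin d → k))) SetLike.coe_injective

/-- fiber of the span map -/
noncomputable def fiberEquiv (d m : ℕ) (W : {W : Submodule k (Fin d → k) // finrank k W = m}) :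
    {s : {s : Fin m → (Fin d → k) // LinearIndependent k s} //
        Submodule.span k (Set.range s.1) = W.1}
      ≃ {t : Fin m → W.1 // LinearIndependent k t} where
  toFun s := ⟨fun i => ⟨s.1.1 i, by
      have h := Submodule.subset_span (R := k) (Set.mem_range_self (f := s.1.1) i)
      rw [s.2] at h; exact h⟩,
    LinearIndependent.of_comp W.1.subtype s.1.2⟩
  invFun t := ⟨⟨fun i => (t.1 i : Fin d → k), t.2.map' W.1.subtype (Submodule.ker_subtype _)⟩, by
    have hsp : Submodule.span k (Set.range t.1) = ⊤ := by
      apply Submodule.eq_top_of_finrank_eq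
      rw [finrank_span_eq_card t.2, Fintype.card_fin, W.2]
    have : Set.range (fun i => (t.1 i : Fin d → k)) = W.1.subtype '' (Set.range t.1) := by
      rw [← Set.range_comp]; rfl
    rw [this, Submodule.span_image, hsp, Submodule.map_top, Submodule.range_subtype]⟩
  left_inv s := by ext i : 3; rfl
  right_inv t := by ext i : 3; rfl

lemma nat_card_sigma {ι : Type*} [Fintype ι] (f : ι → Type*) [∀ i, Finite (f i)] :
    Nat.card (Σ i, f i) = ∑ i : ι, Nat.card (f i) := by
  letI : ∀ i, Fintype (f i) := fun i => Fintype.ofFinite _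
  rw [Nat.card_eq_fintype_card (α := Σ i, f i), Fintype.card_sigma]
  exact Finset.sum_congr rfl fun i _ => (Nat.card_eq_fintype_card).symm

lemma card_subspaces_mul (d m : ℕ) (hm : m ≤ d) :
    Nat.card {W : Submodule k (Fin d → k) // finrank k W = m} *
        ∏ i : Fin m, (Fintype.card k ^ m - Fintype.card k ^ (i : ℕ))
      = ∏ i : Fin m, (Fintype.card k ^ d - Fintype.card k ^ (i : ℕ)) := by
  classical
  have hrk : finrank k (Fin d → k) = d := by simp
  have h1 := card_linearIndependent (K := k) (V := Fin d → k) (k := m) (by rw [hrk]; exact hm)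
  rw [hrk] at h1
  rw [← h1]
  have e2 := Equiv.sigmaFiberEquiv
    (fun s : {s : Fin m → (Fin d → k) // LinearIndependent k s} =>
      (⟨Submodule.span k (Set.range s.1), by
        rw [finrank_span_eq_card s.2, Fintype.card_fin]⟩ :
        {W : Submodule k (Fin d → k) // finrank k W = m}))
  rw [← Nat.card_congr e2]
  have e3 : ∀ W : {W : Submodule k (Fin d → k) // finrank k W = m},
      Nat.card {s : {s : Fin m → (Fin d → k) // LinearIndependent k s} //
          (⟨Submodule.span k (Set.range s.1), by
            rw [finrank_span_eq_card s.2, Fintype.card_fin]⟩ :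
            {W : Submodule k (Fin d → k) // finrank k W = m}) = W}
        = ∏ i : Fin m, (Fintype.card k ^ m - Fintype.card k ^ (i : ℕ)) := by
    intro W
    have := fiberEquiv d m W
    have e4 : {s : {s : Fin m → (Fin d → k) // LinearIndependent k s} //
          Submodule.span k (Set.range s.1) = W.1} ≃ {t : Fin m → W.1 // LinearIndependent k t} :=
      this
    have e5 : {s : {s : Fin m → (Fin d → k) // LinearIndependent k s} //
        (⟨Submodule.span k (Set.range s.1), by
            rw [finrank_span_eq_card s.2, Fintype.card_fin]⟩ :
            {W : Submodule k (Fin d → k) // finrank k W = m}) = W}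
        ≃ {s : {s : Fin m → (Fin d → k) // LinearIndependent k s} //
          Submodule.span k (Set.range s.1) = W.1} :=
      Equiv.subtypeEquivRight (fun s => by
        constructor
        · intro h; exact congrArg Subtype.val h
        · intro h; exact Subtype.ext h)
    rw [Nat.card_congr (e5.trans e4)]
    have := card_linearIndependent (K := k) (V := W.1) (k := m) (by rw [W.2])
    rw [W.2] at this
    exact this
  rw [nat_card_sigma, Finset.sum_congr rfl (fun W _ => e3 W), Finset.sum_const, smul_eq_mul,
    Finset.card_univ]
  exact congrArg (· * ∏ i : Fin m, (Fintype.card k ^ m - Fintype.card k ^ (i : ℕ)))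
    Nat.card_eq_fintype_card


lemma gauss_eq (q : ℕ) (hq : 1 < q) (d m : ℕ) (hm : m ≤ d) :
    gaussBinomial (q : ℚ) d m =
      (∏ i ∈ range m, ((q : ℚ) ^ d - (q : ℚ) ^ i)) /
        (∏ i ∈ range m, ((q : ℚ) ^ m - (q : ℚ) ^ i)) := by
  have hq0 : (q : ℚ) ≠ 0 := by positivity
  rw [gaussBinomial, if_pos hm, ← Finset.prod_div_distrib]
  calc ∏ i ∈ range m, ((q:ℚ) ^ (d - m + i + 1) - 1) / ((q:ℚ) ^ (i + 1) - 1)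
      = ∏ i ∈ range m, ((q:ℚ) ^ (d - (m - 1 - i)) - 1) / ((q:ℚ) ^ (m - (m - 1 - i)) - 1) := by
        apply Finset.prod_congr rfl
        intro i hi
        rw [Finset.mem_range] at hi
        have h1 : d - (m - 1 - i) = d - m + i + 1 := by omega
        have h2 : m - (m - 1 - i) = i + 1 := by omega
        rw [h1, h2]
    _ = ∏ i ∈ range m, ((q:ℚ) ^ (d - i) - 1) / ((q:ℚ) ^ (m - i) - 1) :=
        Finset.prod_range_reflect (fun i => ((q:ℚ) ^ (d - i) - 1) / ((q:ℚ) ^ (m - i) - 1)) m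
    _ = ∏ i ∈ range m, ((q:ℚ) ^ d - (q:ℚ) ^ i) / ((q:ℚ) ^ m - (q:ℚ) ^ i) := by
        apply Finset.prod_congr rfl
        intro i hi
        rw [Finset.mem_range] at hi
        have h3 : (q : ℚ) ^ d - (q : ℚ) ^ i = (q : ℚ) ^ i * ((q : ℚ) ^ (d - i) - 1) := by
          rw [mul_sub, mul_one, ← pow_add]
          congr 2
          omega
        have h4 : (q : ℚ) ^ m - (q : ℚ) ^ i = (q : ℚ) ^ i * ((q : ℚ) ^ (m - i) - 1) := by
          rw [mul_sub, mul_one, ← pow_add]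
          congr 2
          omega
        rw [h3, h4, mul_div_mul_left _ _ (pow_ne_zero i hq0)]


lemma card_eq_gauss {k : Type*} [Field k] [Fintype k] (d m : ℕ) (hm : m ≤ d) :
    (Nat.card {W : Submodule k (Fin d → k) // finrank k W = m} : ℚ)
      = gaussBinomial (Fintype.card k) d m := by
  have hq : 1 < Fintype.card k := Fintype.one_lt_card
  set q := Fintype.card k with hqdef
  have h := card_subspaces_mul (k := k) d m hm
  have cast_prod : ∀ (n : ℕ), m ≤ n → ((∏ i : Fin m, (q ^ n - q ^ (i : ℕ)) : ℕ) : ℚ)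
      = ∏ i ∈ range m, ((q : ℚ) ^ n - (q : ℚ) ^ i) := by
    intro n hn
    rw [Nat.cast_prod, ← Fin.prod_univ_eq_prod_range (fun i => ((q : ℚ) ^ n - (q : ℚ) ^ i)) m]
    apply Finset.prod_congr rfl
    intro i _
    rw [Nat.cast_sub (Nat.pow_le_pow_right (le_of_lt hq)
      (le_trans (le_of_lt i.2) hn))]
    push_cast
    ring
  have h1q : (1 : ℚ) < q := by exact_mod_cast hq
  have hA0 : ∏ i ∈ range m, ((q : ℚ) ^ m - (q : ℚ) ^ i) ≠ 0 := by
    apply Finset.prod_ne_zero_iff.mpr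
    intro i hi
    rw [Finset.mem_range] at hi
    have hlt : (q : ℚ) ^ i < (q : ℚ) ^ m := pow_lt_pow_right₀ h1q hi
    linarith
  have hcast : (Nat.card {W : Submodule k (Fin d → k) // finrank k W = m} : ℚ) *
      (∏ i ∈ range m, ((q : ℚ) ^ m - (q : ℚ) ^ i))
        = ∏ i ∈ range m, ((q : ℚ) ^ d - (q : ℚ) ^ i) := by
    have h2 := congrArg (Nat.cast : ℕ → ℚ) h
    rw [Nat.cast_mul, cast_prod m le_rfl, cast_prod d hm] at h2
    exact h2
  rw [gauss_eq q hq d m hm, eq_div_iff hA0]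
  exact hcast

lemma card_submodule_eq {k : Type*} [Field k] [Fintype k] (d : ℕ) :
    (Nat.card (Submodule k (Fin d → k)) : ℚ)
      = ∑ m ∈ range (d + 1), gaussBinomial (Fintype.card k) d m := by
  classical
  have hfr : ∀ W : Submodule k (Fin d → k), finrank k W < d + 1 := by
    intro W
    have h1 := Submodule.finrank_le W
    have hrk : finrank k (Fin d → k) = d := by simp
    omega
  have e := Equiv.sigmaFiberEquiv (fun W : Submodule k (Fin d → k) =>
    (⟨finrank k W, hfr W⟩ : Fin (d + 1)))
  rw [← Nat.card_congr e, nat_card_sigma, Nat.cast_sum,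
    ← Fin.sum_univ_eq_sum_range (fun m => gaussBinomial (Fintype.card k) d m) (d + 1)]
  apply Finset.sum_congr rfl
  intro i _
  have e2 : {W : Submodule k (Fin d → k) // (⟨finrank k W, hfr W⟩ : Fin (d + 1)) = i}
      ≃ {W : Submodule k (Fin d → k) // finrank k W = (i : ℕ)} :=
    Equiv.subtypeEquivRight (fun W => by rw [Fin.ext_iff])
  rw [Nat.card_congr e2, card_eq_gauss d i (Nat.lt_succ_iff.mp i.2)]

end Aux

/-- The number of orbits of `d`-tuples of vectors in a vector space of countably infinite
dimension over a finite field with `q` elements, under the diagonal action of the group of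
linear automorphisms, equals `∑_{m=0}^{d} [d choose m]_q`. -/
theorem stmt6 {k V : Type*} [Field k] [Fintype k] [AddCommGroup V] [Module k V]
    (bV : Module.Basis ℕ k V) (d : ℕ) :
    (Nat.card (MulAction.orbitRel.Quotient (V ≃ₗ[k] V) (Fin d → V)) : ℚ) =
      ∑ m ∈ Finset.range (d + 1), gaussBinomial (Fintype.card k) d m := by
  rw [card_orbit_eq bV d, card_submodule_eq d]
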